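/- Let 𝒜 be a finite set of affine hyperplanes in ℝ^ℓ and let H ∈ 𝒜. Then the number of connected components of ℝ^ℓ \ ⋃_{K ∈ 𝒜} K equals the number of connected components of ℝ^ℓ \ ⋃_{K ∈ 𝒜 \ {H}} K plus the number of connected components of H \ ⋃_{K ∈ 𝒜 \ {H}} K (the latter with the subspace topology on H). -/
import Mathlib


/-- An affine hyperplane in `𝕜^ℓ`: the level set of a nonzero linear functional. -/
def IsAffineHyperplane {𝕜 : Type*} [Field 𝕜] {ℓ : ℕ} (H : Set (Fin ℓ → 𝕜)) : Prop :=
  ∃ f : (Fin ℓ → 𝕜) →ₗ[𝕜] 𝕜, f ≠ 0 ∧ ∃ c : 𝕜, H = {z | f z = c}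

open Set


lemma region_count_eq_sign_count {ℓ : ℕ} {ι : Type} [Finite ι]
    (φ : ι → ((Fin ℓ → ℝ) →ₗ[ℝ] ℝ)) (c : ι → ℝ)
    (C : Set (Fin ℓ → ℝ)) (hC : Convex ℝ C) :
    Nat.card (ConnectedComponents {z : Fin ℓ → ℝ | z ∈ C ∧ ∀ i, φ i z ≠ c i}) =
      Nat.card {σ : ι → Bool |
        ∃ z, (z ∈ C ∧ ∀ i, φ i z ≠ c i) ∧ σ = fun i => decide (c i < φ i z)} := by
  classical
  set T : Set (Fin ℓ → ℝ) := {z | z ∈ C ∧ ∀ i, φ i z ≠ c i} with hTdef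
  have hφc : ∀ i, Continuous (φ i) := fun i => LinearMap.continuous_of_finiteDimensional _
  have hΦ : Continuous (fun t : T => fun i => decide (c i < φ i (t : Fin ℓ → ℝ))) := by
    refine continuous_pi fun i => ?_
    refine IsLocallyConstant.continuous (IsLocallyConstant.iff_isOpen_fiber.2 fun b => ?_)
    cases b
    · have he : ((fun t : T => decide (c i < φ i (t : Fin ℓ → ℝ))) ⁻¹' {false})
          = Subtype.val ⁻¹' {z | φ i z < c i} := by
        ext t
        simp only [mem_preimage, mem_singleton_iff, decide_eq_false_iff_not, not_lt,
          mem_setOf_eq]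
        exact ⟨fun h => lt_of_le_of_ne h (t.2.2 i), le_of_lt⟩
      rw [he]
      exact (isOpen_lt (hφc i) continuous_const).preimage continuous_subtype_val
    · have he : ((fun t : T => decide (c i < φ i (t : Fin ℓ → ℝ))) ⁻¹' {true})
          = Subtype.val ⁻¹' {z | c i < φ i z} := by
        ext t
        simp only [mem_preimage, mem_singleton_iff, decide_eq_true_eq, mem_setOf_eq]
      rw [he]
      exact (isOpen_lt continuous_const (hφc i)).preimage continuous_subtype_val
  have hinj : Function.Injective hΦ.connectedComponentsLift := by
    intro x y hxy
    obtain ⟨a, rfl⟩ := ConnectedComponents.surjective_coe x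
    obtain ⟨b, rfl⟩ := ConnectedComponents.surjective_coe y
    simp only [Continuous.connectedComponentsLift_apply_coe] at hxy
    set σ : ι → Bool := fun i => decide (c i < φ i (a : Fin ℓ → ℝ)) with hσdef
    set R : Set (Fin ℓ → ℝ) :=
      C ∩ ⋂ i, {z | if σ i then c i < φ i z else φ i z < c i} with hRdef
    have hRconv : Convex ℝ R := by
      refine hC.inter (convex_iInter fun i => ?_)
      by_cases h : σ i = true
      · simp only [if_pos h]
        exact convex_halfSpace_gt (φ i).isLinear (c i)
      · simp only [if_neg h]
        exact convex_halfSpace_lt (φ i).isLinear (c i)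
    have hmem : ∀ t : T, (fun i => decide (c i < φ i (t : Fin ℓ → ℝ))) = σ →
        (t : Fin ℓ → ℝ) ∈ R := by
      intro t ht
      refine ⟨t.2.1, mem_iInter.2 fun i => ?_⟩
      have h1 : decide (c i < φ i (t : Fin ℓ → ℝ)) = σ i := congrFun ht i
      by_cases hσ : σ i = true
      · rw [hσ] at h1
        rw [mem_setOf_eq, if_pos hσ]
        exact of_decide_eq_true h1
      · have hσ' : σ i = false := by simpa using hσ
        rw [hσ'] at h1
        rw [mem_setOf_eq, if_neg hσ]
        exact lt_of_le_of_ne (not_lt.1 (of_decide_eq_false h1)) (t.2.2 i)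
    have hRT : R ⊆ T := by
      rintro z ⟨hzC, hz⟩
      refine ⟨hzC, fun i => ?_⟩
      have h2 := mem_iInter.1 hz i
      by_cases hσ : σ i = true
      · rw [mem_setOf_eq, if_pos hσ] at h2
        exact ne_of_gt h2
      · rw [mem_setOf_eq, if_neg hσ] at h2
        exact ne_of_lt h2
    have hpre : IsPreconnected (Subtype.val ⁻¹' R : Set T) := by
      rw [← (Topology.IsInducing.subtypeVal :
        Topology.IsInducing ((↑) : T → (Fin ℓ → ℝ))).isPreconnected_image]
      have himg : (Subtype.val '' (Subtype.val ⁻¹' R : Set T)) = R := by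
        rw [Subtype.image_preimage_coe]
        exact inter_eq_self_of_subset_right hRT
      rw [himg]
      exact hRconv.isPreconnected
    have ha : a ∈ (Subtype.val ⁻¹' R : Set T) := hmem a rfl
    have hb : b ∈ (Subtype.val ⁻¹' R : Set T) := hmem b hxy.symm
    have hcc := hpre.subset_connectedComponent ha hb
    exact ConnectedComponents.coe_eq_coe.2 (connectedComponent_eq hcc)
  have hrange : Set.range hΦ.connectedComponentsLift
      = {σ : ι → Bool |
        ∃ z, (z ∈ C ∧ ∀ i, φ i z ≠ c i) ∧ σ = fun i => decide (c i < φ i z)} := by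
    ext σ
    constructor
    · rintro ⟨x, rfl⟩
      obtain ⟨a, rfl⟩ := ConnectedComponents.surjective_coe x
      exact ⟨a, a.2, rfl⟩
    · rintro ⟨z, hz, rfl⟩
      exact ⟨((⟨z, hz⟩ : T) : ConnectedComponents T), rfl⟩
  rw [← Nat.card_range_of_injective hinj, hrange]

lemma deletion_restriction_aux {ℓ : ℕ} {ι : Type} [Finite ι]
    (φ' : ι → ((Fin ℓ → ℝ) →ₗ[ℝ] ℝ)) (d' : ι → ℝ)
    (fH : (Fin ℓ → ℝ) →ₗ[ℝ] ℝ) (hfH : fH ≠ 0) (cH : ℝ) :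
    Nat.card (ConnectedComponents
        {z : Fin ℓ → ℝ | fH z ≠ cH ∧ ∀ i, φ' i z ≠ d' i}) =
      Nat.card (ConnectedComponents {z : Fin ℓ → ℝ | ∀ i, φ' i z ≠ d' i})
        + Nat.card (ConnectedComponents
            {z : Fin ℓ → ℝ | fH z = cH ∧ ∀ i, φ' i z ≠ d' i}) := by
  classical
  haveI : Fintype ι := Fintype.ofFinite ι
  haveI : Finite (Option ι) := inferInstance
  set φ : Option ι → ((Fin ℓ → ℝ) →ₗ[ℝ] ℝ) := fun o => o.elim fH φ' with hφdef
  set d : Option ι → ℝ := fun o => o.elim cH d' with hddef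
  set Hs : Set (Fin ℓ → ℝ) := {z | fH z = cH} with hHsdef
  have hHsconv : Convex ℝ Hs := convex_hyperplane fH.isLinear cH
  have e1 : {z : Fin ℓ → ℝ | fH z ≠ cH ∧ ∀ i, φ' i z ≠ d' i}
      = {z : Fin ℓ → ℝ | z ∈ (univ : Set (Fin ℓ → ℝ)) ∧ ∀ o : Option ι, φ o z ≠ d o} := by
    ext z
    simp only [mem_setOf_eq, mem_univ, true_and]
    constructor
    · rintro ⟨h0, h1⟩ (_|i)
      · exact h0
      · exact h1 i
    · intro h
      exact ⟨h none, fun i => h (some i)⟩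
  have e2 : {z : Fin ℓ → ℝ | ∀ i, φ' i z ≠ d' i}
      = {z : Fin ℓ → ℝ | z ∈ (univ : Set (Fin ℓ → ℝ)) ∧ ∀ i, φ' i z ≠ d' i} := by
    ext z; simp
  have e3 : {z : Fin ℓ → ℝ | fH z = cH ∧ ∀ i, φ' i z ≠ d' i}
      = {z : Fin ℓ → ℝ | z ∈ Hs ∧ ∀ i, φ' i z ≠ d' i} := rfl
  rw [e1, e2, e3, region_count_eq_sign_count φ d univ convex_univ,
    region_count_eq_sign_count φ' d' univ convex_univ,
    region_count_eq_sign_count φ' d' Hs hHsconv]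
  set S : Set (Option ι → Bool) := {σ | ∃ z, (z ∈ (univ : Set (Fin ℓ → ℝ)) ∧
      ∀ o, φ o z ≠ d o) ∧ σ = fun o => decide (d o < φ o z)} with hSdef
  set S' : Set (ι → Bool) := {σ | ∃ z, (z ∈ (univ : Set (Fin ℓ → ℝ)) ∧
      ∀ i, φ' i z ≠ d' i) ∧ σ = fun i => decide (d' i < φ' i z)} with hS'def
  set SH : Set (ι → Bool) := {σ | ∃ z, (z ∈ Hs ∧
      ∀ i, φ' i z ≠ d' i) ∧ σ = fun i => decide (d' i < φ' i z)} with hSHdef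
  -- the chamber of a sign vector
  set R : (ι → Bool) → Set (Fin ℓ → ℝ) :=
    fun τ => {z | ∀ i, if τ i = true then d' i < φ' i z else φ' i z < d' i} with hRdef
  have hφ'c : ∀ i, Continuous (φ' i) := fun i => LinearMap.continuous_of_finiteDimensional _
  have hlink : ∀ (τ : ι → Bool) (z : Fin ℓ → ℝ),
      ((∀ i, φ' i z ≠ d' i) ∧ τ = fun i => decide (d' i < φ' i z)) ↔ z ∈ R τ := by
    intro τ z
    constructor
    · rintro ⟨hne, rfl⟩ i
      by_cases h : d' i < φ' i z
      · simp [h]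
      · rw [if_neg (by simp [h])]
        exact lt_of_le_of_ne (not_lt.1 h) (hne i)
    · intro h
      have hne : ∀ i, φ' i z ≠ d' i := by
        intro i
        have h2 := h i
        by_cases hτ : τ i = true
        · rw [if_pos hτ] at h2; exact ne_of_gt h2
        · rw [if_neg hτ] at h2; exact ne_of_lt h2
      refine ⟨hne, funext fun i => ?_⟩
      have h2 := h i
      by_cases hτ : τ i = true
      · rw [if_pos hτ] at h2; rw [hτ, eq_comm, decide_eq_true_eq]; exact h2
      · rw [if_neg hτ] at h2
        have : τ i = false := by simpa using hτ
        rw [this, eq_comm, decide_eq_false_iff_not]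
        exact not_lt.2 (le_of_lt h2)
  have hmemS' : ∀ τ : ι → Bool, τ ∈ S' ↔ ∃ z, z ∈ R τ := by
    intro τ
    constructor
    · rintro ⟨z, ⟨-, hne⟩, rfl⟩
      exact ⟨z, (hlink _ z).1 ⟨hne, rfl⟩⟩
    · rintro ⟨z, hz⟩
      obtain ⟨hne, heq⟩ := (hlink τ z).2 hz
      exact ⟨z, ⟨mem_univ z, hne⟩, heq⟩
  have hmemSH : ∀ τ : ι → Bool, τ ∈ SH ↔ ∃ z, fH z = cH ∧ z ∈ R τ := by
    intro τ
    constructor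
    · rintro ⟨z, ⟨hzH, hne⟩, rfl⟩
      exact ⟨z, hzH, (hlink _ z).1 ⟨hne, rfl⟩⟩
    · rintro ⟨z, hzH, hz⟩
      obtain ⟨hne, heq⟩ := (hlink τ z).2 hz
      exact ⟨z, ⟨hzH, hne⟩, heq⟩
  have hmemS : ∀ (τ : ι → Bool) (b : Bool),
      (fun o : Option ι => o.elim b τ) ∈ S ↔
        ∃ z, z ∈ R τ ∧ (if b = true then cH < fH z else fH z < cH) := by
    intro τ b
    constructor
    · rintro ⟨z, ⟨-, hne⟩, heq⟩
      have hτ : τ = fun i => decide (d' i < φ' i z) := by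
        funext i; exact congrFun heq (some i)
      have hzR : z ∈ R τ := (hlink τ z).1 ⟨fun i => hne (some i), hτ⟩
      refine ⟨z, hzR, ?_⟩
      have hb : b = decide (cH < fH z) := congrFun heq none
      have hne0 : fH z ≠ cH := hne none
      cases hb' : b
      · rw [hb'] at hb
        rw [if_neg (by simp)]
        exact lt_of_le_of_ne (not_lt.1 (of_decide_eq_false hb.symm)) hne0
      · rw [hb'] at hb
        rw [if_pos rfl]
        exact of_decide_eq_true hb.symm
    · rintro ⟨z, hzR, hb⟩
      obtain ⟨hne, heq⟩ := (hlink τ z).2 hzR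
      have hne0 : fH z ≠ cH := by
        cases hb' : b
        · rw [hb', if_neg (by simp)] at hb; exact ne_of_lt hb
        · rw [hb', if_pos rfl] at hb; exact ne_of_gt hb
      refine ⟨z, ⟨mem_univ z, ?_⟩, ?_⟩
      · rintro (_|i)
        · exact hne0
        · exact hne i
      · funext o
        match o with
        | none =>
          show b = decide (cH < fH z)
          cases hb' : b
          · rw [hb', if_neg (by simp)] at hb
            exact (decide_eq_false (not_lt.2 (le_of_lt hb))).symm
          · rw [hb', if_pos rfl] at hb
            exact (decide_eq_true hb).symm
        | some i => exact congrFun heq i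
  -- chambers are open and convex
  have hRopen : ∀ τ, IsOpen (R τ) := by
    intro τ
    have : R τ = ⋂ i, {z | if τ i = true then d' i < φ' i z else φ' i z < d' i} := by
      ext z; simp only [hRdef, mem_setOf_eq, mem_iInter]
    rw [this]
    refine isOpen_iInter_of_finite fun i => ?_
    by_cases hτ : τ i = true
    · simp only [if_pos hτ]
      exact isOpen_lt continuous_const (hφ'c i)
    · simp only [if_neg hτ]
      exact isOpen_lt (hφ'c i) continuous_const
  have hRconv : ∀ τ, Convex ℝ (R τ) := by
    intro τ
    have : R τ = ⋂ i, {z | if τ i = true then d' i < φ' i z else φ' i z < d' i} := by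
      ext z; simp only [hRdef, mem_setOf_eq, mem_iInter]
    rw [this]
    refine convex_iInter fun i => ?_
    by_cases hτ : τ i = true
    · simp only [if_pos hτ]
      exact convex_halfSpace_gt (φ' i).isLinear (d' i)
    · simp only [if_neg hτ]
      exact convex_halfSpace_lt (φ' i).isLinear (d' i)
  -- perturbation off the hyperplane
  have hboth : ∀ (τ : ι → Bool) (x : Fin ℓ → ℝ), fH x = cH → x ∈ R τ →
      (∃ z, z ∈ R τ ∧ cH < fH z) ∧ (∃ z, z ∈ R τ ∧ fH z < cH) := by
    intro τ x hxH hxR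
    obtain ⟨w₀, hw₀⟩ : ∃ w, fH w ≠ 0 := by
      by_contra h
      push_neg at h
      exact hfH (LinearMap.ext fun w => by simp [h w])
    set w : Fin ℓ → ℝ := (fH w₀)⁻¹ • w₀ with hwdef
    have hw : fH w = 1 := by
      simp [hwdef, map_smul, smul_eq_mul, inv_mul_cancel₀ hw₀]
    have hcurve : Continuous fun t : ℝ => x + t • w :=
      continuous_const.add (continuous_id.smul continuous_const)
    have hopen : IsOpen ((fun t : ℝ => x + t • w) ⁻¹' R τ) := (hRopen τ).preimage hcurve
    have h0 : (0 : ℝ) ∈ (fun t : ℝ => x + t • w) ⁻¹' R τ := by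
      simp only [mem_preimage, zero_smul, add_zero]
      exact hxR
    obtain ⟨ε, hε, hball⟩ := Metric.isOpen_iff.1 hopen 0 h0
    have hx' : ∀ t : ℝ, |t| < ε → x + t • w ∈ R τ := by
      intro t ht
      exact hball (by simpa [Real.dist_eq] using ht)
    have hfval : ∀ t : ℝ, fH (x + t • w) = cH + t := by
      intro t
      simp [map_add, map_smul, smul_eq_mul, hxH, hw]
    constructor
    · refine ⟨x + (ε / 2) • w, hx' _ (by rw [abs_of_pos (by linarith)]; linarith), ?_⟩
      rw [hfval]; linarith
    · refine ⟨x + (-(ε / 2)) • w, hx' _ (by rw [abs_of_neg (by linarith)]; linarith), ?_⟩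
      rw [hfval]; linarith
  -- crossing the hyperplane within a convex chamber
  have hcross : ∀ τ : ι → Bool, (∃ z, z ∈ R τ ∧ cH < fH z) → (∃ z, z ∈ R τ ∧ fH z < cH) →
      ∃ z, fH z = cH ∧ z ∈ R τ := by
    rintro τ ⟨p, hp, hfp⟩ ⟨q, hq, hfq⟩
    have hpq : fH q < fH p := lt_trans hfq hfp
    set t : ℝ := (cH - fH q) / (fH p - fH q) with htdef
    have hne : fH p - fH q ≠ 0 := ne_of_gt (by linarith)
    have ht0 : 0 ≤ t := div_nonneg (by linarith) (by linarith)
    have ht1 : t ≤ 1 := by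
      rw [div_le_one (by linarith)]; linarith
    have hzmem : (1 - t) • q + t • p ∈ R τ :=
      (hRconv τ) hq hp (by linarith) ht0 (by ring)
    refine ⟨(1 - t) • q + t • p, ?_, hzmem⟩
    have ht' : t * (fH p - fH q) = cH - fH q := div_mul_cancel₀ _ hne
    have hexp : (1 - t) * fH q + t * fH p = fH q + t * (fH p - fH q) := by ring
    rw [map_add, map_smul, map_smul, smul_eq_mul, smul_eq_mul, hexp, ht']
    ring
  -- fibers
  have hfiber₁ : ∀ τ : ι → Bool, (∃ z, z ∈ R τ) →
      ∃ b, (fun o : Option ι => o.elim b τ) ∈ S := by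
    rintro τ ⟨z, hz⟩
    rcases lt_trichotomy (fH z) cH with h | h | h
    · exact ⟨false, (hmemS τ false).2 ⟨z, hz, by rw [if_neg (by simp)]; exact h⟩⟩
    · obtain ⟨⟨p, hp, hfp⟩, -⟩ := hboth τ z h hz
      exact ⟨true, (hmemS τ true).2 ⟨p, hp, by rw [if_pos rfl]; exact hfp⟩⟩
    · exact ⟨true, (hmemS τ true).2 ⟨z, hz, by rw [if_pos rfl]; exact h⟩⟩
  have hfiber₂ : ∀ τ : ι → Bool,
      ((fun o : Option ι => o.elim true τ) ∈ S ∧ (fun o : Option ι => o.elim false τ) ∈ S)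
        ↔ τ ∈ SH := by
    intro τ
    constructor
    · rintro ⟨h1, h2⟩
      obtain ⟨p, hp, hfp⟩ := (hmemS τ true).1 h1
      obtain ⟨q, hq, hfq⟩ := (hmemS τ false).1 h2
      rw [if_pos rfl] at hfp
      rw [if_neg (by simp)] at hfq
      obtain ⟨z, hzH, hzR⟩ := hcross τ ⟨p, hp, hfp⟩ ⟨q, hq, hfq⟩
      exact (hmemSH τ).2 ⟨z, hzH, hzR⟩
    · intro hτ
      obtain ⟨z, hzH, hzR⟩ := (hmemSH τ).1 hτ
      obtain ⟨⟨p, hp, hfp⟩, ⟨q, hq, hfq⟩⟩ := hboth τ z hzH hzR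
      constructor
      · exact (hmemS τ true).2 ⟨p, hp, by rw [if_pos rfl]; exact hfp⟩
      · exact (hmemS τ false).2 ⟨q, hq, by rw [if_neg (by simp)]; exact hfq⟩
  have hsub : ∀ (τ : ι → Bool) (b : Bool), (fun o : Option ι => o.elim b τ) ∈ S → τ ∈ S' := by
    intro τ b h
    obtain ⟨z, hz, -⟩ := (hmemS τ b).1 h
    exact (hmemS' τ).2 ⟨z, hz⟩
  -- the bijection
  have hGfalse : ∀ τ : ↥S', ¬ (fun o : Option ι => o.elim false τ.1) ∈ S →
      (fun o : Option ι => o.elim true τ.1) ∈ S := by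
    rintro ⟨τ, hτ⟩ hc
    obtain ⟨b, hb⟩ := hfiber₁ τ ((hmemS' τ).1 hτ)
    cases hb' : b
    · rw [hb'] at hb; exact absurd hb hc
    · rw [hb'] at hb; exact hb
  set G : ↥S' ⊕ ↥SH → ↥S := Sum.elim
      (fun τ => if h : (fun o : Option ι => o.elim false τ.1) ∈ S
        then ⟨fun o : Option ι => o.elim false τ.1, h⟩
        else ⟨fun o : Option ι => o.elim true τ.1, hGfalse τ h⟩)
      (fun τ => ⟨fun o : Option ι => o.elim true τ.1, ((hfiber₂ τ.1).2 τ.2).1⟩) with hGdef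
  have hGinl : ∀ a : ↥S', (G (Sum.inl a)).1 = (fun o : Option ι => o.elim false a.1) ∨
      ((G (Sum.inl a)).1 = (fun o : Option ι => o.elim true a.1) ∧
        ¬ (fun o : Option ι => o.elim false a.1) ∈ S) := by
    intro a
    by_cases hc : (fun o : Option ι => o.elim false a.1) ∈ S
    · left; simp [hGdef, hc]
    · right; exact ⟨by simp [hGdef, hc], hc⟩
  have hGinr : ∀ b : ↥SH, (G (Sum.inr b)).1 = fun o : Option ι => o.elim true b.1 := by
    intro b; simp [hGdef]
  have hrestr : ∀ (τ : ι → Bool) (b : Bool) (υ : ι → Bool) (b' : Bool),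
      (fun o : Option ι => o.elim b τ) = (fun o : Option ι => o.elim b' υ) →
        τ = υ ∧ b = b' := by
    intro τ b υ b' h
    constructor
    · funext i; exact congrFun h (some i)
    · exact congrFun h none
  have hGbij : Function.Bijective G := by
    constructor
    · rintro (a | a) (b | b) h
      · have hv : (G (Sum.inl a)).1 = (G (Sum.inl b)).1 := by rw [h]
        rcases hGinl a with ha | ⟨ha, -⟩ <;> rcases hGinl b with hb | ⟨hb, -⟩ <;>
          rw [ha, hb] at hv <;>
          exact congrArg Sum.inl (Subtype.ext (hrestr _ _ _ _ hv).1)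
      · exfalso
        have hv : (G (Sum.inl a)).1 = (G (Sum.inr b)).1 := by rw [h]
        rw [hGinr b] at hv
        rcases hGinl a with ha | ⟨ha, hns⟩
        · rw [ha] at hv
          exact absurd (hrestr _ _ _ _ hv).2 (by simp)
        · rw [ha] at hv
          have hab : a.1 = b.1 := (hrestr _ _ _ _ hv).1
          have : (fun o : Option ι => o.elim false a.1) ∈ S := by
            rw [hab]; exact ((hfiber₂ b.1).2 b.2).2
          exact hns this
      · exfalso
        have hv : (G (Sum.inr a)).1 = (G (Sum.inl b)).1 := by rw [h]
        rw [hGinr a] at hv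
        rcases hGinl b with hb | ⟨hb, hns⟩
        · rw [hb] at hv
          exact absurd (hrestr _ _ _ _ hv).2 (by simp)
        · rw [hb] at hv
          have hab : a.1 = b.1 := (hrestr _ _ _ _ hv).1
          have : (fun o : Option ι => o.elim false b.1) ∈ S := by
            rw [← hab]; exact ((hfiber₂ a.1).2 a.2).2
          exact hns this
      · have hv : (G (Sum.inr a)).1 = (G (Sum.inr b)).1 := by rw [h]
        rw [hGinr a, hGinr b] at hv
        exact congrArg Sum.inr (Subtype.ext (hrestr _ _ _ _ hv).1)
    · rintro ⟨σ, hσ⟩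
      have hσe : σ = fun o : Option ι => o.elim (σ none) (fun i => σ (some i)) := by
        funext o; cases o <;> rfl
      set τ : ι → Bool := fun i => σ (some i) with hτdef
      have hσS : (fun o : Option ι => o.elim (σ none) τ) ∈ S := by rw [← hσe]; exact hσ
      have hτS' : τ ∈ S' := hsub τ (σ none) hσS
      cases hb : σ none
      · refine ⟨Sum.inl ⟨τ, hτS'⟩, ?_⟩
        have hc : (fun o : Option ι => o.elim false τ) ∈ S := by
          rw [← hb]; exact hσS
        apply Subtype.ext
        simp only [hGdef, Sum.elim_inl, dif_pos hc]
        funext o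
        cases o
        · exact hb.symm
        · rfl
      · by_cases hc : (fun o : Option ι => o.elim false τ) ∈ S
        · have hτSH : τ ∈ SH := (hfiber₂ τ).1 ⟨by rw [← hb]; exact hσS, hc⟩
          refine ⟨Sum.inr ⟨τ, hτSH⟩, ?_⟩
          apply Subtype.ext
          rw [hGinr]
          funext o
          cases o
          · exact hb.symm
          · rfl
        · refine ⟨Sum.inl ⟨τ, hτS'⟩, ?_⟩
          apply Subtype.ext
          simp only [hGdef, Sum.elim_inl, dif_neg hc]
          funext o
          cases o
          · exact hb.symm
          · rfl
  calc Nat.card ↥S = Nat.card (↥S' ⊕ ↥SH) :=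
        (Nat.card_congr (Equiv.ofBijective G hGbij)).symm
    _ = Nat.card ↥S' + Nat.card ↥SH := Nat.card_sum

/-- Deletion–restriction recursion for the number of regions of a real
hyperplane arrangement: the number of regions of `𝒜` equals the number of
regions of the deleted arrangement `𝒜 \\ {H}` plus the number of regions of the
restriction of `𝒜 \\ {H}` to `H`. -/
theorem deletion_restriction_region_count
    (ℓ : ℕ) (𝒜 : Finset (Set (Fin ℓ → ℝ)))
    (h𝒜 : ∀ K ∈ 𝒜, IsAffineHyperplane K)
    (H : Set (Fin ℓ → ℝ)) (hH : H ∈ 𝒜) :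
    Nat.card (ConnectedComponents {z : Fin ℓ → ℝ | ∀ K ∈ 𝒜, z ∉ K}) =
      Nat.card (ConnectedComponents {z : Fin ℓ → ℝ | ∀ K ∈ 𝒜, K ≠ H → z ∉ K})
        + Nat.card (ConnectedComponents
            {z : Fin ℓ → ℝ | z ∈ H ∧ ∀ K ∈ 𝒜, K ≠ H → z ∉ K}) := by
  classical
  choose f hf0 c hfc using h𝒜
  set E : Finset (Set (Fin ℓ → ℝ)) := 𝒜.erase H with hE
  haveI : Fintype {K // K ∈ E} := FinsetCoe.fintype E
  set φ' : {K // K ∈ E} → ((Fin ℓ → ℝ) →ₗ[ℝ] ℝ) :=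
    fun K => f K.1 (Finset.mem_of_mem_erase K.2) with hφ'
  set d' : {K // K ∈ E} → ℝ := fun K => c K.1 (Finset.mem_of_mem_erase K.2) with hd'
  have hmem : ∀ (K) (h : K ∈ 𝒜) (z : Fin ℓ → ℝ), z ∉ K ↔ f K h z ≠ c K h := by
    intro K h z
    constructor
    · intro hz heq
      exact hz (by rw [hfc K h]; exact heq)
    · intro hne hz
      exact hne (by rw [hfc K h] at hz; exact hz)
  have hfull : {z : Fin ℓ → ℝ | ∀ K ∈ 𝒜, z ∉ K}
      = {z : Fin ℓ → ℝ | f H hH z ≠ c H hH ∧ ∀ i : {K // K ∈ E}, φ' i z ≠ d' i} := by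
    ext z
    simp only [mem_setOf_eq]
    constructor
    · intro h
      exact ⟨(hmem H hH z).1 (h H hH),
        fun i => (hmem i.1 (Finset.mem_of_mem_erase i.2) z).1
          (h i.1 (Finset.mem_of_mem_erase i.2))⟩
    · rintro ⟨h0, h1⟩ K hK
      by_cases hKH : K = H
      · subst hKH
        exact (hmem K hK z).2 h0
      · exact (hmem K hK z).2 (h1 ⟨K, Finset.mem_erase.2 ⟨hKH, hK⟩⟩)
  have hdel : {z : Fin ℓ → ℝ | ∀ K ∈ 𝒜, K ≠ H → z ∉ K}
      = {z : Fin ℓ → ℝ | ∀ i : {K // K ∈ E}, φ' i z ≠ d' i} := by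
    ext z
    simp only [mem_setOf_eq]
    constructor
    · intro h i
      exact (hmem i.1 (Finset.mem_of_mem_erase i.2) z).1
        (h i.1 (Finset.mem_of_mem_erase i.2) (Finset.ne_of_mem_erase i.2))
    · intro h K hK hKH
      exact (hmem K hK z).2 (h ⟨K, Finset.mem_erase.2 ⟨hKH, hK⟩⟩)
  have hres : {z : Fin ℓ → ℝ | z ∈ H ∧ ∀ K ∈ 𝒜, K ≠ H → z ∉ K}
      = {z : Fin ℓ → ℝ | f H hH z = c H hH ∧ ∀ i : {K // K ∈ E}, φ' i z ≠ d' i} := by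
    ext z
    simp only [mem_setOf_eq]
    constructor
    · rintro ⟨hz, h⟩
      refine ⟨by rw [hfc H hH] at hz; exact hz, fun i =>
        (hmem i.1 (Finset.mem_of_mem_erase i.2) z).1
          (h i.1 (Finset.mem_of_mem_erase i.2) (Finset.ne_of_mem_erase i.2))⟩
    · rintro ⟨hz, h⟩
      exact ⟨by rw [hfc H hH]; exact hz,
        fun K hK hKH => (hmem K hK z).2 (h ⟨K, Finset.mem_erase.2 ⟨hKH, hK⟩⟩)⟩
  rw [hfull, hdel, hres]
  exact deletion_restriction_aux φ' d' (f H hH) (hf0 H hH) (c H hH)
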